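/- The functor A: Span_R(G-set) → C_R is not faithful: two spans Y ← U → X (maps β, α) and Y ← U' → X (maps β', α') of G-sets have the same image under A if and only if there exist an isomorphism of G-sets f: U → U' and a morphism of G-sets t: U → G^c (G with conjugation action) such that β'∘f = β and α'(f(u)) = t(u)·α(u) for all u ∈ U. In particular, for any nonconstant G-map t: U → G^c, the spans U ← U → U with legs (id,id) and (id, t·id) both map to the identity of U/G. -/

import Mathlib

open CategoryTheory

/-- Objects of the category `𝒞_R`: a finite group `G` together with a finite `G`-set `X`,
thought of as the fraction `X/G`. -/
structure CObj : Type 1 where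
  (G : Type)
  [grp : Group G]
  [finG : Finite G]
  (X : Type)
  [act : MulAction G X]
  [finX : Finite X]

attribute [instance] CObj.grp CObj.finG CObj.act CObj.finX

/-- Build an object `X/G` of `𝒞_R`. -/
@[reducible] def objOf (G : Type) [Group G] [Finite G] (X : Type) [MulAction G X] [Finite X] : CObj :=
  ⟨G, X⟩

/-- A span of bisets from `X/G` to `Y/H`: an `(H × G)`-set `U` with structure maps
`β : U → Y`, `α : U → X` satisfying `β ((h,g) • u) = h • β u` and `α ((h,g) • u) = g • α u`. -/
structure Span (A B : CObj) : Type 1 where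
  (U : Type)
  [act : MulAction (B.G × A.G) U]
  [finU : Finite U]
  (β : U → B.X)
  (α : U → A.X)
  (equiv_β : ∀ (h : B.G) (g : A.G) (u : U), β ((h, g) • u) = h • β u)
  (equiv_α : ∀ (h : B.G) (g : A.G) (u : U), α ((h, g) • u) = g • α u)

attribute [instance] Span.act Span.finU

/-- An equivalence of spans: an equivariant bijection commuting with both structure maps. -/
structure SpanIso {A B : CObj} (S T : Span A B) : Type where
  (e : S.U ≃ T.U)
  (equiv : ∀ (p : B.G × A.G) (u : S.U), e (p • u) = p • e u)
  (hβ : ∀ u, T.β (e u) = S.β u)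
  (hα : ∀ u, T.α (e u) = S.α u)

lemma pair_one_smul {M N α : Type*} [Monoid M] [Monoid N] [MulAction (M × N) α] (x : α) :
    ((1 : M), (1 : N)) • x = x := by
  have h : ((1 : M), (1 : N)) = (1 : M × N) := rfl
  rw [h, one_smul]

lemma smul_smul_pair {M N α : Type*} [Monoid M] [Monoid N] [MulAction (M × N) α]
    (a c : M) (b d : N) (x : α) : (a, b) • (c, d) • x = (a * c, b * d) • x := by
  rw [← mul_smul]; rfl

/-- The fiber of the composition: pairs `(v, u)` with `γ v = β u`. -/
def compFiber {A B C : CObj} (S : Span A B) (T : Span B C) : Type :=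
  {p : T.U × S.U // T.α p.1 = S.β p.2}

instance {A B C : CObj} (S : Span A B) (T : Span B C) : Finite (compFiber S T) :=
  Subtype.finite

/-- The `H`-orbit relation on the fiber. -/
def compSetoid {A B C : CObj} (S : Span A B) (T : Span B C) : Setoid (compFiber S T) where
  r p q := ∃ h : B.G, q.1.1 = ((1 : C.G), h) • p.1.1 ∧ q.1.2 = (h, (1 : A.G)) • p.1.2
  iseqv := by
    constructor
    · intro p
      exact ⟨1, by simp [pair_one_smul], by simp [pair_one_smul]⟩
    · rintro p q ⟨h, h1, h2⟩
      exact ⟨h⁻¹, by simp [h1, smul_smul_pair, pair_one_smul],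
        by simp [h2, smul_smul_pair, pair_one_smul]⟩
    · rintro p q r ⟨h, h1, h2⟩ ⟨h', h1', h2'⟩
      exact ⟨h' * h, by simp [h1', h1, smul_smul_pair],
        by simp [h2', h2, smul_smul_pair]⟩

/-- Composition of spans: `S.comp T` is the composite `T ∘ S` (first `S : X/G → Y/H`,
then `T : Y/H → Z/K`), given by the set of `H`-orbits `V ×̂_H U` with the induced maps. -/
def Span.comp {A B C : CObj} (S : Span A B) (T : Span B C) : Span A C where
  U := Quotient (compSetoid S T)
  act :=
    { smul := fun m => Quotient.map
        (fun q => ⟨((m.1, (1 : B.G)) • q.1.1, ((1 : B.G), m.2) • q.1.2), by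
          rw [T.equiv_α, S.equiv_β, one_smul, one_smul]; exact q.2⟩)
        (by
          rintro p q ⟨h, h1, h2⟩
          exact ⟨h, by simp [h1, smul_smul_pair], by simp [h2, smul_smul_pair]⟩)
      one_smul := by
        rintro ⟨p⟩
        exact Quotient.sound ⟨1, by simp [smul_smul_pair, pair_one_smul],
          by simp [smul_smul_pair, pair_one_smul]⟩
      mul_smul := fun m n => by
        rintro ⟨p⟩
        exact Quotient.sound ⟨1, by simp [smul_smul_pair, pair_one_smul],
          by simp [smul_smul_pair, pair_one_smul]⟩ }
  finU := Quotient.finite _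
  β := Quotient.lift (fun p => T.β p.1.1)
    (by rintro p q ⟨h, h1, h2⟩; show T.β p.val.1 = T.β q.val.1; rw [h1, T.equiv_β, one_smul])
  α := Quotient.lift (fun p => S.α p.1.2)
    (by rintro p q ⟨h, h1, h2⟩; show S.α p.val.2 = S.α q.val.2; rw [h2, S.equiv_α, one_smul])
  equiv_β := by rintro c a ⟨p⟩; exact T.equiv_β c 1 p.1.1
  equiv_α := by rintro c a ⟨p⟩; exact S.equiv_α 1 a p.1.2

/-- The conjugation-type action of `G × G` on `G × X`:
`(a, b) • (g, x) = (a g b⁻¹, a • x)`. -/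
def conjAct (G X : Type) [Group G] [MulAction G X] : MulAction (G × G) (G × X) where
  smul p q := (p.1 * q.1 * p.2⁻¹, p.1 • q.2)
  one_smul := by
    rintro ⟨g, x⟩
    show (1 * g * 1⁻¹, (1 : G) • x) = (g, x)
    simp
  mul_smul := by
    rintro ⟨a, b⟩ ⟨c, d⟩ ⟨g, x⟩
    show ((a * c) * g * (b * d)⁻¹, ((a * c) : G) • x) = (a * (c * g * d⁻¹) * b⁻¹, a • c • x)
    simp [mul_assoc, mul_smul, mul_inv_rev]

/-- The identity span `⟨G × X, 1̲, 1̄⟩` of the object `X/G`. -/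
def Span.id (A : CObj) : Span A A where
  U := A.G × A.X
  act := conjAct A.G A.X
  finU := inferInstance
  β := fun q => q.2
  α := fun q => q.1⁻¹ • q.2
  equiv_β := fun _ _ _ => rfl
  equiv_α := by
    rintro h g ⟨a, x⟩
    show (h * a * g⁻¹)⁻¹ • (h • x) = g • a⁻¹ • x
    simp [mul_inv_rev, mul_smul]


/-- The left-coset relation on a group `Γ` with respect to a subgroup `D`. -/
def cosetSetoid {Γ : Type} [Group Γ] (D : Subgroup Γ) : Setoid Γ where
  r p q := ∃ d ∈ D, q = p * d
  iseqv := by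
    constructor
    · exact fun p => ⟨1, D.one_mem, by simp⟩
    · rintro p q ⟨d, hd, rfl⟩
      exact ⟨d⁻¹, D.inv_mem hd, by simp [mul_assoc]⟩
    · rintro p q r ⟨d, hd, rfl⟩ ⟨e, he, rfl⟩
      exact ⟨d * e, D.mul_mem hd he, by simp [mul_assoc]⟩

/-- The set of left cosets `Γ/D`. -/
def Cosets {Γ : Type} [Group Γ] (D : Subgroup Γ) : Type := Quotient (cosetSetoid D)

/-- The coset of an element. -/
def Cosets.mk {Γ : Type} [Group Γ] (D : Subgroup Γ) (g : Γ) : Cosets D :=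
  Quotient.mk _ g

instance {Γ : Type} [Group Γ] (D : Subgroup Γ) : MulAction Γ (Cosets D) where
  smul m := Quotient.map (fun p => m * p)
    (by rintro p q ⟨d, hd, rfl⟩; exact ⟨d, hd, by rw [mul_assoc]⟩)
  one_smul := by rintro ⟨p⟩; exact congrArg (Quotient.mk _) (one_mul p)
  mul_smul m n := by rintro ⟨p⟩; exact congrArg (Quotient.mk _) (mul_assoc m n p)

instance {Γ : Type} [Group Γ] [Finite Γ] (D : Subgroup Γ) : Finite (Cosets D) :=
  Quotient.finite _

/-- The span `⟨G×T, β̲, ᾱ⟩` of `𝒞_R` associated to a span `Y ← T → X` of `G`-sets: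
`G × T` carries the `(G × G)`-action `(g₁,g₂) • (g,t) = (g₁ g g₂⁻¹, g₁ • t)`, with
`β̲(g,t) = β t` and `ᾱ(g,t) = g⁻¹ • α t`. -/
def ASpan (G : Type) [Group G] [Finite G] {X Y T : Type}
    [MulAction G X] [Finite X] [MulAction G Y] [Finite Y] [MulAction G T] [Finite T]
    (β : T → Y) (α : T → X)
    (hβ : ∀ (g : G) (t : T), β (g • t) = g • β t)
    (hα : ∀ (g : G) (t : T), α (g • t) = g • α t) :
    Span (objOf G X) (objOf G Y) where
  U := G × T
  act := conjAct G T
  finU := inferInstance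
  β := fun q => β q.2
  α := fun q => q.1⁻¹ • α q.2
  equiv_β := by
    rintro h g ⟨a, t⟩
    show β (h • t) = h • β t
    exact hβ h t
  equiv_α := by
    rintro h g ⟨a, t⟩
    show (h * a * g⁻¹)⁻¹ • α (h • t) = g • a⁻¹ • α t
    rw [hα]
    simp [mul_inv_rev, mul_smul]

section Stmt18

variable (G : Type) [Group G] [Finite G] {X Y U U' : Type}
  [MulAction G X] [Finite X] [MulAction G Y] [Finite Y]
  [MulAction G U] [Finite U] [MulAction G U'] [Finite U']

/-- Auxiliary: build a `SpanIso` between two `ASpan`s from an equivariant bijection `f`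
together with a twisting `G`-map `t : U → G^c`. -/
def mkSpanIso (β : U → Y) (α : U → X) (β' : U' → Y) (α' : U' → X)
    (hβ : ∀ (g : G) (u : U), β (g • u) = g • β u)
    (hα : ∀ (g : G) (u : U), α (g • u) = g • α u)
    (hβ' : ∀ (g : G) (u : U'), β' (g • u) = g • β' u)
    (hα' : ∀ (g : G) (u : U'), α' (g • u) = g • α' u)
    (f : U ≃ U') (hf : ∀ (g : G) (u : U), f (g • u) = g • f u)
    (t : U → G) (ht : ∀ (g : G) (u : U), t (g • u) = g * t u * g⁻¹)
    (h1 : ∀ u : U, β' (f u) = β u) (h2 : ∀ u : U, α' (f u) = t u • α u) :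
    SpanIso (ASpan G β α hβ hα) (ASpan G β' α' hβ' hα') where
  e :=
    { toFun := fun q : G × U => (t q.2 * q.1, f q.2)
      invFun := fun q : G × U' => ((t (f.symm q.2))⁻¹ * q.1, f.symm q.2)
      left_inv := by rintro ⟨g, u⟩; simp; rfl
      right_inv := by rintro ⟨g, v⟩; simp; rfl }
  equiv := by
    rintro ⟨a, b⟩ ⟨g, u⟩
    show (t (a • u) * (a * g * b⁻¹), f (a • u)) = (a * (t u * g) * b⁻¹, a • f u)
    rw [ht, hf]
    refine Prod.ext ?_ rfl
    group
  hβ := by rintro ⟨g, u⟩; exact h1 u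
  hα := by
    rintro ⟨g, u⟩
    show (t u * g)⁻¹ • α' (f u) = g⁻¹ • α u
    rw [h2, mul_inv_rev, mul_smul, inv_smul_smul]

/-- The functor `A : Span_R(G-set) → 𝒞_R` is not faithful: two spans
`Y ← U → X` and `Y ← U' → X` of `G`-sets have the same image under `A` (i.e. equivalent
image spans) if and only if there exist an isomorphism of `G`-sets `f : U → U'` and a
`G`-map `t : U → G^c` (`G` with the conjugation action) with `β' ∘ f = β` and
`α' (f u) = t u • α u`. In particular, for any `G`-map `t : U → G^c`, the spans
`U ← U → U` with legs `(id, id)` and `(id, t·id)` both map to the identity of `U/G`. -/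
theorem burnside_span_functor_not_faithful
    (β : U → Y) (α : U → X) (β' : U' → Y) (α' : U' → X)
    (hβ : ∀ (g : G) (u : U), β (g • u) = g • β u)
    (hα : ∀ (g : G) (u : U), α (g • u) = g • α u)
    (hβ' : ∀ (g : G) (u : U'), β' (g • u) = g • β' u)
    (hα' : ∀ (g : G) (u : U'), α' (g • u) = g • α' u) :
    (Nonempty (SpanIso (ASpan G β α hβ hα) (ASpan G β' α' hβ' hα')) ↔
      ∃ f : U ≃ U', (∀ (g : G) (u : U), f (g • u) = g • f u) ∧
        ∃ t : U → G, (∀ (g : G) (u : U), t (g • u) = g * t u * g⁻¹) ∧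
          (∀ u : U, β' (f u) = β u) ∧ (∀ u : U, α' (f u) = t u • α u)) ∧
    ∀ (t : U → G) (ht : ∀ (g : G) (u : U), t (g • u) = g * t u * g⁻¹),
      Nonempty (SpanIso
        (ASpan G (fun u : U => u) (fun u : U => t u • u) (fun _ _ => rfl)
          (fun g u => by
            show t (g • u) • (g • u) = g • (t u • u)
            rw [ht]
            simp [mul_smul]))
        (Span.id (objOf G U))) := by
  constructor
  · constructor
    · rintro ⟨σ⟩
      have key : ∀ (g : G) (u : U),
          (σ.e (g, u) : G × U') =
            ((σ.e ((1 : G), u) : G × U').1 * g, (σ.e ((1 : G), u) : G × U').2) := by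
        intro g u
        have h : σ.e ((((1 : G) * 1 * g⁻¹⁻¹, (1 : G) • u)) : G × U)
            = ((1 : G) * (σ.e ((1 : G), u) : G × U').1 * g⁻¹⁻¹,
              (1 : G) • (σ.e ((1 : G), u) : G × U').2) :=
          σ.equiv ((1 : G), g⁻¹) ((1 : G), u)
        simpa using h
      have keyg : ∀ (g : G) (u : U),
          (σ.e ((1 : G), g • u) : G × U') =
            (g * (σ.e ((1 : G), u) : G × U').1 * g⁻¹,
              g • (σ.e ((1 : G), u) : G × U').2) := by
        intro g u
        have h : σ.e (((g * 1 * g⁻¹, g • u)) : G × U)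
            = (g * (σ.e ((1 : G), u) : G × U').1 * g⁻¹,
              g • (σ.e ((1 : G), u) : G × U').2) :=
          σ.equiv ((g, g) : G × G) ((1 : G), u)
        simpa using h
      have hinj : Function.Injective (fun u : U => (σ.e ((1 : G), u) : G × U').2) := by
        intro u₁ u₂ hEq
        simp only at hEq
        have h2 : σ.e ((((σ.e ((1 : G), u₁) : G × U').1)⁻¹ *
              (σ.e ((1 : G), u₂) : G × U').1, u₁) : G × U)
            = σ.e (((1 : G), u₂) : G × U) := by
          rw [key, key]
          refine Prod.ext ?_ hEq
          simp
        have h3 := σ.e.injective h2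
        exact congrArg (fun q : G × U => q.2) h3
      have hsurj : Function.Surjective (fun u : U => (σ.e ((1 : G), u) : G × U').2) := by
        intro v
        obtain ⟨⟨g, u⟩, hu⟩ : ∃ q : G × U, σ.e q = (((1 : G), v) : G × U') :=
          ⟨σ.e.symm ((1 : G), v), σ.e.apply_symm_apply _⟩
        refine ⟨u, ?_⟩
        have h := key g u
        rw [hu] at h
        exact (congrArg (fun q : G × U' => q.2) h).symm
      refine ⟨Equiv.ofBijective _ ⟨hinj, hsurj⟩, ?_,
        fun u => (σ.e ((1 : G), u) : G × U').1, ?_, ?_, ?_⟩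
      · intro g u
        exact congrArg (fun q : G × U' => q.2) (keyg g u)
      · intro g u
        exact congrArg (fun q : G × U' => q.1) (keyg g u)
      · intro u
        exact σ.hβ ((1 : G), u)
      · intro u
        have h : ((σ.e ((1 : G), u) : G × U').1)⁻¹ •
            α' ((σ.e ((1 : G), u) : G × U').2) = ((1 : G))⁻¹ • α u := σ.hα ((1 : G), u)
        rw [inv_one, one_smul] at h
        show α' ((σ.e ((1 : G), u) : G × U').2) = _
        rw [← h, smul_inv_smul]
    · rintro ⟨f, hf, t, ht, h1, h2⟩
      exact ⟨mkSpanIso G β α β' α' hβ hα hβ' hα' f hf t ht h1 h2⟩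
  · intro t ht
    exact ⟨mkSpanIso G (fun u : U => u) (fun u : U => t u • u)
      (fun u : U => u) (fun u : U => u)
      (fun _ _ => rfl)
      (fun g u => by show t (g • u) • (g • u) = g • (t u • u); rw [ht]; simp [mul_smul])
      (fun _ _ => rfl) (fun _ _ => rfl)
      (Equiv.refl U) (fun _ _ => rfl)
      (fun u => (t u)⁻¹)
      (fun g u => by show (t (g • u))⁻¹ = g * (t u)⁻¹ * g⁻¹; rw [ht]; group)
      (fun u => rfl)
      (fun u => (inv_smul_smul (t u) u).symm)⟩

end Stmt18
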